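/- For every integer k ≥ 1, let n = 2k+1. Then for every integer j with 0 ≤ j ≤ n-1, the alternating sum (-1)^j · Σ_{k1+k2=j, 0 ≤ k1,k2 ≤ k} (2k2+1-2k1) · C(n,2k1) · C(n,2k2+1) equals n · C(n-1,j), where C(a,b) denotes the binomial coefficient. In particular this sum is always positive. -/

import Mathlib

open Polynomial Finset

lemma coeff_one_sub_X_sq_pow (N m : ℕ) :
    ((1 - X ^ 2 : Polynomial ℤ) ^ N).coeff m =
      if m % 2 = 0 then (-1 : ℤ) ^ (m / 2) * (N.choose (m / 2) : ℤ) else 0 := by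
  have h : (1 - X ^ 2 : Polynomial ℤ) ^ N =
      ∑ i ∈ range (N + 1), C ((-1 : ℤ) ^ i * (N.choose i : ℤ)) * X ^ (2 * i) := by
    rw [sub_eq_add_neg, add_comm, add_pow]
    refine Finset.sum_congr rfl fun i _ => ?_
    rw [neg_pow, one_pow]
    simp only [map_mul, map_pow, map_neg, map_one, map_natCast]
    ring
  rw [h, finset_sum_coeff]
  simp only [coeff_C_mul, coeff_X_pow]
  rcases Nat.even_or_odd m with he | ho
  · have hm : m % 2 = 0 := Nat.even_iff.mp he
    rw [if_pos hm, Finset.sum_eq_single (m / 2)]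
    · rw [if_pos (show m = 2 * (m / 2) by omega), mul_one]
    · intro b _ hb
      have : m ≠ 2 * b := by omega
      simp [this]
    · intro h
      have : N < m / 2 := by simp at h; omega
      simp [Nat.choose_eq_zero_of_lt this]
  · have hm : ¬ m % 2 = 0 := by rw [Nat.odd_iff.mp ho]; simp
    rw [if_neg hm]
    refine Finset.sum_eq_zero fun i _ => ?_
    have : m ≠ 2 * i := by omega
    simp [this]

lemma coeff_one_sub_X_pow (N m : ℕ) :
    ((1 - X : Polynomial ℤ) ^ N).coeff m = (-1 : ℤ) ^ m * (N.choose m : ℤ) := by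
  have h : (1 - X : Polynomial ℤ) ^ N =
      ∑ i ∈ range (N + 1), C ((-1 : ℤ) ^ i * (N.choose i : ℤ)) * X ^ i := by
    rw [sub_eq_add_neg, add_comm, add_pow]
    refine Finset.sum_congr rfl fun i _ => ?_
    rw [neg_pow, one_pow]
    simp only [map_mul, map_pow, map_neg, map_one, map_natCast]
    ring
  rw [h, finset_sum_coeff]
  simp only [coeff_C_mul, coeff_X_pow]
  rcases le_or_gt m N with hm | hm
  · rw [Finset.sum_eq_single m]
    · simp
    · intro b _ hb; simp [hb.symm]
    · intro h; simp at h; omega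
  · rw [Nat.choose_eq_zero_of_lt hm]
    rw [Finset.sum_eq_zero fun i hi => ?_]
    · simp
    · simp at hi
      have : m ≠ i := by omega
      simp [this]

lemma sumU (M j : ℕ) :
    ∑ c ∈ range (2 * j + 1), (-1 : ℤ) ^ c * (M.choose c : ℤ) * ((M + 1).choose (2 * j - c) : ℤ)
      = (-1 : ℤ) ^ j * (M.choose j : ℤ) := by
  have key : ((1 - X : Polynomial ℤ) ^ M * (X + 1) ^ (M + 1))
      = (1 - X ^ 2 : Polynomial ℤ) ^ M * (X + 1) := by
    rw [pow_succ, ← mul_assoc, ← mul_pow]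
    congr 2
    ring
  have h2 := congrArg (fun p => Polynomial.coeff p (2 * j)) key
  simp only [coeff_mul] at h2
  rw [Finset.Nat.sum_antidiagonal_eq_sum_range_succ_mk] at h2
  simp only [coeff_one_sub_X_pow, coeff_X_add_one_pow] at h2
  rw [h2]
  rw [Finset.Nat.sum_antidiagonal_eq_sum_range_succ_mk]
  simp only [Nat.succ_eq_add_one] at h2 ⊢
  rcases Nat.eq_zero_or_pos j with rfl | hj
  · simp [coeff_one_sub_X_sq_pow]
  · rw [show 2 * j + 1 = (2 * j - 1 + 1) + 1 by omega]
    rw [Finset.sum_range_succ, Finset.sum_range_succ]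
    rw [Finset.sum_eq_zero, coeff_one_sub_X_sq_pow, coeff_one_sub_X_sq_pow]
    · have h1 : (2 * j - 1 + 1) % 2 = 0 := by omega
      have h1' : (2 * j - 1 + 1) / 2 = j := by omega
      have h2 : ¬ (2 * j - 1) % 2 = 0 := by omega
      rw [if_pos h1, if_neg h2, h1']
      have : (X + 1 : Polynomial ℤ).coeff 0 = 1 := by simp
      have h3 : (X + 1 : Polynomial ℤ).coeff 1 = 1 := by simp [coeff_one]
      rw [show 2 * j - (2 * j - 1) = 1 by omega, show 2 * j - (2 * j - 1 + 1) = 0 by omega,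
        this, h3]
      ring
    · intro c hc
      simp only [Finset.mem_range] at hc
      rw [coeff_one_sub_X_sq_pow]
      have : (X + 1 : Polynomial ℤ).coeff (2 * j - c) = 0 := by
        have h4 : ¬ (1 = 2 * j - c) := by omega
        have h5 : ¬ (2 * j - c = 0) := by omega
        rw [coeff_add, coeff_X, coeff_one, if_neg h4, if_neg h5, add_zero]
      rw [this, mul_zero]


lemma Tzero (n j : ℕ) :
    ∑ a ∈ range (2 * j + 2), (-1 : ℤ) ^ a * (n.choose a : ℤ) * (n.choose (2 * j + 1 - a) : ℤ)
      = 0 := by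
  set f : ℕ → ℤ := fun a => (-1 : ℤ) ^ a * (n.choose a : ℤ) * (n.choose (2 * j + 1 - a) : ℤ)
    with hf
  have hrefl := Finset.sum_range_reflect f (2 * j + 2)
  have hneg : ∀ a ∈ range (2 * j + 2), f (2 * j + 2 - 1 - a) = - f a := by
    intro a ha
    simp only [Finset.mem_range] at ha
    have h1 : 2 * j + 2 - 1 - a = 2 * j + 1 - a := by omega
    have h2 : 2 * j + 1 - (2 * j + 1 - a) = a := by omega
    have h3 : (-1 : ℤ) ^ (2 * j + 1 - a) = - (-1 : ℤ) ^ a := by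
      rcases Nat.even_or_odd a with he | ho
      · have : Odd (2 * j + 1 - a) := by
          rcases he with ⟨c, rfl⟩; exact ⟨j - c, by omega⟩
        simp [this.neg_one_pow, he.neg_one_pow]
      · have : Even (2 * j + 1 - a) := by
          rcases ho with ⟨c, rfl⟩; exact ⟨j - c, by omega⟩
        simp [this.neg_one_pow, ho.neg_one_pow]
    simp only [hf, h1, h2, h3]
    ring
  rw [Finset.sum_congr rfl hneg, Finset.sum_neg_distrib] at hrefl
  linarith

lemma sum_range_even_odd {M : Type*} [AddCommMonoid M] (f : ℕ → M) (n : ℕ) :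
    ∑ a ∈ range (2 * n), f a = ∑ i ∈ range n, (f (2 * i) + f (2 * i + 1)) := by
  induction n with
  | zero => simp
  | succ n ih =>
    rw [show 2 * (n + 1) = (2 * n + 1) + 1 by ring, Finset.sum_range_succ,
      Finset.sum_range_succ, ih, Finset.sum_range_succ, add_assoc]

lemma stepC (k j : ℕ) :
    ∑ i ∈ range (j + 1),
        (2 * ((j - i : ℕ) : ℤ) + 1 - 2 * (i : ℤ)) * ((2 * k + 1).choose (2 * i) : ℤ) *
          ((2 * k + 1).choose (2 * (j - i) + 1) : ℤ)
      = (-1 : ℤ) ^ j * (2 * k + 1) * ((2 * k).choose j : ℤ) := by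
  set n := 2 * k + 1 with hn
  set t : ℕ → ℤ := fun i =>
    (2 * ((j - i : ℕ) : ℤ) + 1 - 2 * (i : ℤ)) * (n.choose (2 * i) : ℤ) *
      (n.choose (2 * (j - i) + 1) : ℤ) with ht
  set F : ℕ → ℤ := fun a =>
    (-1 : ℤ) ^ a * ((2 * j + 1 : ℤ) - 2 * a) * (n.choose a : ℤ) *
      (n.choose (2 * j + 1 - a) : ℤ) with hF
  -- Full sum equals twice the desired sum
  have h1 : ∑ a ∈ range (2 * (j + 1)), F a
      = ∑ i ∈ range (j + 1), (F (2 * i) + F (2 * i + 1)) := sum_range_even_odd F (j + 1)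
  have heven : ∀ i ∈ range (j + 1), F (2 * i) = t i := by
    intro i hi
    simp only [Finset.mem_range] at hi
    have hij : i ≤ j := by omega
    simp only [hF, ht]
    have hs : (-1 : ℤ) ^ (2 * i) = 1 := by
      rw [pow_mul]; norm_num
    rw [hs, show 2 * j + 1 - 2 * i = 2 * (j - i) + 1 by omega]
    have : ((j - i : ℕ) : ℤ) = (j : ℤ) - i := by
      rw [Nat.cast_sub hij]
    rw [this]
    push_cast
    ring
  have hodd : ∑ i ∈ range (j + 1), F (2 * i + 1) = ∑ i ∈ range (j + 1), t i := by
    rw [← Finset.sum_range_reflect (fun i => F (2 * i + 1)) (j + 1)]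
    refine Finset.sum_congr rfl fun i hi => ?_
    simp only [Finset.mem_range] at hi
    have hij : i ≤ j := by omega
    have harg : j + 1 - 1 - i = j - i := by omega
    rw [harg]
    simp only [hF, ht]
    have hs : (-1 : ℤ) ^ (2 * (j - i) + 1) = -1 := by
      rw [pow_succ, pow_mul]; norm_num
    rw [hs, show 2 * j + 1 - (2 * (j - i) + 1) = 2 * i by omega]
    have hc1 : ((j - i : ℕ) : ℤ) = (j : ℤ) - i := Nat.cast_sub hij
    push_cast [hc1]
    ring
  have h2 : ∑ a ∈ range (2 * (j + 1)), F a = 2 * ∑ i ∈ range (j + 1), t i := by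
    rw [h1, Finset.sum_congr rfl (fun i hi => by rw [heven i hi]), Finset.sum_add_distrib,
      hodd]
    ring
  -- Evaluate the full sum
  have h3 : ∑ a ∈ range (2 * (j + 1)), F a
      = (2 * j + 1) * ∑ a ∈ range (2 * j + 2),
            (-1 : ℤ) ^ a * (n.choose a : ℤ) * (n.choose (2 * j + 1 - a) : ℤ)
        - 2 * ∑ a ∈ range (2 * j + 2),
            (-1 : ℤ) ^ a * (a : ℤ) * (n.choose a : ℤ) * (n.choose (2 * j + 1 - a) : ℤ) := by
    rw [show 2 * (j + 1) = 2 * j + 2 by ring, Finset.mul_sum, Finset.mul_sum,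
      ← Finset.sum_sub_distrib]
    refine Finset.sum_congr rfl fun a _ => ?_
    simp only [hF]
    ring
  have h4 : ∑ a ∈ range (2 * j + 2),
      (-1 : ℤ) ^ a * (a : ℤ) * (n.choose a : ℤ) * (n.choose (2 * j + 1 - a) : ℤ)
      = - (n : ℤ) * ((-1 : ℤ) ^ j * ((2 * k).choose j : ℤ)) := by
    rw [Finset.sum_range_succ']
    simp only [Nat.cast_zero, mul_zero, zero_mul, add_zero]
    rw [← sumU (2 * k) j, Finset.mul_sum]
    refine Finset.sum_congr rfl fun c _ => ?_
    have habs : (n : ℤ) * ((2 * k).choose c : ℤ) = ((2 * k + 1).choose (c + 1) : ℤ) * (c + 1) := by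
      have := Nat.add_one_mul_choose_eq (2 * k) c
      have h' : (2 * k + 1) * (2 * k).choose c = (2 * k + 1).choose (c + 1) * (c + 1) := this
      exact_mod_cast congrArg (Nat.cast : ℕ → ℤ) h'
    rw [show 2 * j + 1 - (c + 1) = 2 * j - c by omega]
    have hsign : (-1 : ℤ) ^ (c + 1) = -(-1 : ℤ) ^ c := by rw [pow_succ]; ring
    rw [hsign, hn]
    rw [hn] at habs
    push_cast at habs ⊢
    linear_combination ((-1 : ℤ) ^ c * ((2 * k + 1).choose (2 * j - c) : ℤ)) * habs
  rw [Tzero n j] at h3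
  rw [h3, h4] at h2
  have : (2 : ℤ) * ∑ i ∈ range (j + 1), t i
      = 2 * ((-1 : ℤ) ^ j * (n : ℤ) * ((2 * k).choose j : ℤ)) := by
    rw [← h2]; push_cast; ring
  have := mul_left_cancel₀ (by norm_num : (2 : ℤ) ≠ 0) this
  rw [this, hn]
  push_cast
  ring

/-- Lemma 4.7: the alternating sum `A_j^n` equals `n * C(n-1, j)`, where `n = 2k+1`;
in particular it is positive. -/
theorem stmt0 (k : ℕ) (hk : 1 ≤ k) (j : ℕ) (hj : j ≤ 2 * k) :
    (-1 : ℤ) ^ j *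
        ∑ q ∈ (Finset.range (k + 1) ×ˢ Finset.range (k + 1)).filter
            (fun q => q.1 + q.2 = j),
          (2 * (q.2 : ℤ) + 1 - 2 * (q.1 : ℤ)) * ((2 * k + 1).choose (2 * q.1) : ℤ) *
            ((2 * k + 1).choose (2 * q.2 + 1) : ℤ)
      = (2 * k + 1) * ((2 * k).choose j : ℤ) ∧
    0 < ((2 * k + 1) : ℤ) * ((2 * k).choose j : ℤ) := by
  constructor
  · have hset : ((Finset.range (k + 1) ×ˢ Finset.range (k + 1)).filter
        (fun q => q.1 + q.2 = j))
        = ((Finset.range (j + 1)).filter (fun i => i ≤ k ∧ j - i ≤ k)).image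
            (fun i => (i, j - i)) := by
      ext ⟨a, b⟩
      simp only [Finset.mem_filter, Finset.mem_product, Finset.mem_image, Finset.mem_range,
        Prod.mk.injEq]
      constructor
      · rintro ⟨⟨ha, hb⟩, hab⟩
        exact ⟨a, ⟨by omega, by omega, by omega⟩, rfl, by omega⟩
      · rintro ⟨i, ⟨hi1, hi2, hi3⟩, rfl, rfl⟩
        exact ⟨⟨by omega, by omega⟩, by omega⟩
    rw [hset, Finset.sum_image (fun x _ y _ h => (Prod.ext_iff.mp h).1)]
    simp only
    rw [Finset.sum_filter]
    have hsum : ∑ i ∈ range (j + 1),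
        (if i ≤ k ∧ j - i ≤ k then
          (2 * ((j - i : ℕ) : ℤ) + 1 - 2 * (i : ℤ)) * ((2 * k + 1).choose (2 * i) : ℤ) *
            ((2 * k + 1).choose (2 * (j - i) + 1) : ℤ) else 0)
        = ∑ i ∈ range (j + 1),
          (2 * ((j - i : ℕ) : ℤ) + 1 - 2 * (i : ℤ)) * ((2 * k + 1).choose (2 * i) : ℤ) *
            ((2 * k + 1).choose (2 * (j - i) + 1) : ℤ) := by
      refine Finset.sum_congr rfl fun i hi => ?_
      by_cases hP : i ≤ k ∧ j - i ≤ k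
      · rw [if_pos hP]
      · rw [if_neg hP]
        rcases not_and_or.mp hP with h | h
        · rw [Nat.choose_eq_zero_of_lt (by omega : 2 * k + 1 < 2 * i)]
          push_cast
          ring
        · rw [Nat.choose_eq_zero_of_lt (by omega : 2 * k + 1 < 2 * (j - i) + 1)]
          push_cast
          ring
    rw [hsum, stepC k j, ← mul_assoc, ← mul_assoc, ← pow_add,
      Even.neg_one_pow ⟨j, rfl⟩, one_mul]
  · have h1 : 0 < (2 * k).choose j := Nat.choose_pos hj
    have : (0 : ℤ) < ((2 * k).choose j : ℤ) := by exact_mod_cast h1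
    positivity
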